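/- A graph G is a threshold graph if and only if C_4, the complement of C_4, and P_4 are forbidden as induced subgraphs of G. -/

import Mathlib

open SimpleGraph

universe u

/-- `H` is forbidden as an induced subgraph of `G`: no induced subgraph of `G`
is isomorphic to `H`. -/
def ForbiddenIn {W : Type*} {V : Type*} (H : SimpleGraph W) (G : SimpleGraph V) : Prop :=
  ¬ ∃ f : W ↪ V, ∀ u v, G.Adj (f u) (f v) ↔ H.Adj u v

/-- The chair: vertices `0,1,2,3,4` with exactly the edges `01, 12, 23, 24`. -/
def chair : SimpleGraph (Fin 5) :=
  SimpleGraph.fromRel (fun a b =>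
    (a = 0 ∧ b = 1) ∨ (a = 1 ∧ b = 2) ∨ (a = 2 ∧ b = 3) ∨ (a = 2 ∧ b = 4))

/-- `C₄`, `C₄`'s complement, `C₅`, the chair and the co-chair are all forbidden in `G`. -/
def FiveForbidden {V : Type*} (G : SimpleGraph V) : Prop :=
  ForbiddenIn (cycleGraph 4) G ∧ ForbiddenIn (cycleGraph 4)ᶜ G ∧
  ForbiddenIn (cycleGraph 5) G ∧ ForbiddenIn chair G ∧ ForbiddenIn chairᶜ G

/-- `G` is an `{S, K}`-split graph: `V(G)` is the disjoint union of the stable set `S`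
and the clique `K`. -/
def IsSplitPartition {V : Type*} (G : SimpleGraph V) (S K : Set V) : Prop :=
  (∀ v, v ∈ S ∨ v ∈ K) ∧ Disjoint S K ∧
  (∀ a ∈ S, ∀ b ∈ S, ¬ G.Adj a b) ∧
  (∀ a ∈ K, ∀ b ∈ K, a ≠ b → G.Adj a b)

/-- `a b b' a'` is an induced path `P₄` in `G`: the four vertices are distinct and the
only edges among them are `ab`, `bb'`, `b'a'`. -/
def IsInducedP4 {V : Type*} (G : SimpleGraph V) (a b b' a' : V) : Prop :=
  a ≠ b ∧ a ≠ b' ∧ a ≠ a' ∧ b ≠ b' ∧ b ≠ a' ∧ b' ≠ a' ∧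
  G.Adj a b ∧ G.Adj b b' ∧ G.Adj b' a' ∧
  ¬ G.Adj a b' ∧ ¬ G.Adj a a' ∧ ¬ G.Adj b a'

/-- `G` is an `{S, K}`-threshold graph, following the paper's Definition 2.
Here `X i` stands for `X_{i+1}` (real indices `1,…,n+1`) and `A i` stands for `A_i`
(real indices `0,…,n`), so the condition `1 ≤ j ≤ i ≤ n` on real indices becomes
`(j : ℕ) < (i : ℕ)` on the `Fin (n+1)` indices. -/
def IsSKThreshold {V : Type*} (G : SimpleGraph V) (S K : Set V) : Prop :=
  ∃ (n : ℕ) (X A : Fin (n + 1) → Set V),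
    (∀ i j, i ≠ j → Disjoint (X i) (X j)) ∧
    (∀ i j, i ≠ j → Disjoint (A i) (A j)) ∧
    (∀ i j, Disjoint (X i) (A j)) ∧
    K = ⋃ i, X i ∧
    S = ⋃ i, A i ∧
    (∀ v, v ∈ S ∨ v ∈ K) ∧
    (∀ i : Fin (n + 1), (i : ℕ) < n → (X i).Nonempty) ∧
    (∀ i : Fin (n + 1), 0 < (i : ℕ) → (A i).Nonempty) ∧
    (∀ u v, G.Adj u v ↔
      (u ∈ K ∧ v ∈ K ∧ u ≠ v) ∨
      (∃ i j : Fin (n + 1), (j : ℕ) < (i : ℕ) ∧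
        ((u ∈ A i ∧ v ∈ X j) ∨ (v ∈ A i ∧ u ∈ X j))))

/-- The allowed cross (stable-to-clique) edges of a comb.  Indexing conventions:
`A i = A_i` (`0,…,n`), `X i = X_{i+1}` (`1,…,n+1`), `M k = M_{k+1}` (`1,…,l`),
`Y k = Y_{k+1}` (`1,…,l+2`).  `s` is the stable-side endpoint, `x` the clique-side one. -/
def CombCross {V : Type*} (n l k0 : ℕ) (A X : Fin (n + 1) → Set V)
    (M : Fin l → Set V) (Y : Fin (l + 2) → Set V) (s x : V) : Prop :=
  (∃ i j : Fin (n + 1), (j : ℕ) < (i : ℕ) ∧ s ∈ A i ∧ x ∈ X j) ∨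
  ((∃ i, s ∈ A i) ∧ (∃ j, x ∈ Y j)) ∨
  (∃ k : Fin l, s ∈ M k ∧ x ∈ Y ⟨(k : ℕ), by omega⟩) ∨
  (∃ (k1 : Fin l) (k2 : Fin (l + 2)), (k1 : ℕ) < (k2 : ℕ) ∧ (k2 : ℕ) < l ∧
    s ∈ M k1 ∧ x ∈ Y k2) ∨
  (∃ k : Fin l, (k : ℕ) + 1 ≤ k0 ∧ s ∈ M k ∧ x ∈ Y ⟨l, by omega⟩)

/-- `G` is an `{S, K}`-comb, following the paper's Definition 3.
Indexing conventions as in `CombCross`; in particular `Y 0 = X 0` encodes `Y_1 = X_1`,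
`Y ⟨l,_⟩` is `Y_{l+1}` and `Y ⟨l+1,_⟩` is `Y_{l+2}`. -/
def IsSKComb {V : Type*} (G : SimpleGraph V) (S K : Set V) : Prop :=
  ∃ (n l : ℕ) (A X : Fin (n + 1) → Set V) (M : Fin l → Set V)
    (Y : Fin (l + 2) → Set V) (k0 : ℕ),
    -- (1) the sets of the comb, `Y_1 = X_1`, pairwise disjointness of the sets
    Y 0 = X 0 ∧
    (∀ i j, i ≠ j → Disjoint (A i) (A j)) ∧
    (∀ i j, i ≠ j → Disjoint (X i) (X j)) ∧
    (∀ i j, i ≠ j → Disjoint (M i) (M j)) ∧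
    (∀ i j, i ≠ j → Disjoint (Y i) (Y j)) ∧
    (∀ i j, Disjoint (A i) (X j)) ∧
    (∀ i j, Disjoint (A i) (M j)) ∧
    (∀ i j, Disjoint (A i) (Y j)) ∧
    (∀ i j, Disjoint (M i) (X j)) ∧
    (∀ i j, Disjoint (M i) (Y j)) ∧
    (∀ (i : Fin (n + 1)) (j : Fin (l + 2)), 0 < (j : ℕ) → Disjoint (X i) (Y j)) ∧
    -- (2) `S = A ∪ M` is stable and (3) `K = X ∪ Y` is a clique, and they partition `V(G)`
    S = (⋃ i, A i) ∪ (⋃ k, M k) ∧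
    K = (⋃ i, X i) ∪ (⋃ k, Y k) ∧
    (∀ v, v ∈ S ∨ v ∈ K) ∧
    Disjoint S K ∧
    (∀ a ∈ S, ∀ b ∈ S, ¬ G.Adj a b) ∧
    (∀ a ∈ K, ∀ b ∈ K, a ≠ b → G.Adj a b) ∧
    -- (4) for `1 ≤ j ≤ i ≤ n`, `G[A_i ∪ X_j]` is a complete split graph
    (∀ i j : Fin (n + 1), (j : ℕ) < (i : ℕ) → ∀ a ∈ A i, ∀ x ∈ X j, G.Adj a x) ∧
    -- (5) `G[A ∪ Y]` is a complete split graph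
    (∀ i, ∀ a ∈ A i, ∀ j, ∀ y ∈ Y j, G.Adj a y) ∧
    -- (6) for `1 ≤ i ≤ l`, `G[Y_i ∪ M_i]` is a perfect split graph
    (∀ k : Fin l,
      (∀ y ∈ Y ⟨(k : ℕ), by omega⟩, ∃! m, m ∈ M k ∧ G.Adj y m) ∧
      (∀ m ∈ M k, ∃! y, y ∈ Y ⟨(k : ℕ), by omega⟩ ∧ G.Adj y m)) ∧
    -- (7) for `1 ≤ i < j ≤ l`, `G[Y_j ∪ M_i]` is a complete split graph
    (∀ (k1 : Fin l) (k2 : Fin (l + 2)), (k1 : ℕ) < (k2 : ℕ) → (k2 : ℕ) < l →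
      ∀ m ∈ M k1, ∀ y ∈ Y k2, G.Adj m y) ∧
    -- (8) `∃ 1 ≤ k0 ≤ l` such that for all `i ≤ k0`, `G[Y_{l+1} ∪ M_i]` is complete split
    (1 ≤ k0 ∧ k0 ≤ l ∧
      ∀ k : Fin l, (k : ℕ) + 1 ≤ k0 → ∀ m ∈ M k, ∀ y ∈ Y ⟨l, by omega⟩, G.Adj m y) ∧
    -- (9) only `X_{n+1}`, `Y_{l+2}`, `Y_{l+1}`, `M_l`, `A_0` may be empty
    (∀ i : Fin (n + 1), (i : ℕ) < n → (X i).Nonempty) ∧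
    (∀ i : Fin (n + 1), 0 < (i : ℕ) → (A i).Nonempty) ∧
    (∀ k : Fin l, (k : ℕ) + 1 < l → (M k).Nonempty) ∧
    (∀ k : Fin (l + 2), 0 < (k : ℕ) → (k : ℕ) < l → (Y k).Nonempty) ∧
    -- (10) these are the only edges of `G`
    (∀ u v, G.Adj u v → (u ∈ K ∧ v ∈ K) ∨
      CombCross n l k0 A X M Y u v ∨ CombCross n l k0 A X M Y v u)

/-- `G` is a comb. -/
def IsComb {V : Type*} (G : SimpleGraph V) : Prop :=
  ∃ S K : Set V, IsSKComb G S K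

private def NoBad {V : Type*} (G : SimpleGraph V) : Prop :=
  ∀ ⦃u v a b : V⦄, G.Adj u a → G.Adj v b → ¬ G.Adj u b → ¬ G.Adj v a →
    v ≠ a → u ≠ b → False

private lemma inj4 {V : Type*} {x0 x1 x2 x3 : V} (h01 : x0 ≠ x1) (h02 : x0 ≠ x2)
    (h03 : x0 ≠ x3) (h12 : x1 ≠ x2) (h13 : x1 ≠ x3) (h23 : x2 ≠ x3) :
    Function.Injective ![x0, x1, x2, x3] := by
  intro i j hij
  fin_cases i <;> fin_cases j <;> simp_all

private lemma iffAll4 {V : Type*} {G : SimpleGraph V} {H : SimpleGraph (Fin 4)} {x0 x1 x2 x3 : V}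
    (h01 : G.Adj x0 x1 ↔ H.Adj 0 1) (h02 : G.Adj x0 x2 ↔ H.Adj 0 2)
    (h03 : G.Adj x0 x3 ↔ H.Adj 0 3) (h12 : G.Adj x1 x2 ↔ H.Adj 1 2)
    (h13 : G.Adj x1 x3 ↔ H.Adj 1 3) (h23 : G.Adj x2 x3 ↔ H.Adj 2 3) :
    ∀ x y, G.Adj (![x0,x1,x2,x3] x) (![x0,x1,x2,x3] y) ↔ H.Adj x y := by
  have c : ∀ {p q : V} {i j : Fin 4}, (G.Adj p q ↔ H.Adj i j) → (G.Adj q p ↔ H.Adj j i) :=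
    fun h => (G.adj_comm _ _).symm.trans (h.trans (H.adj_comm _ _))
  intro x y
  fin_cases x <;> fin_cases y <;>
    first
      | exact iff_of_false (G.loopless.irrefl _) (H.loopless.irrefl _)
      | exact h01 | exact h02 | exact h03 | exact h12 | exact h13 | exact h23
      | exact c h01 | exact c h02 | exact c h03 | exact c h12 | exact c h13 | exact c h23

private lemma noBad_of_forbidden {V : Type*} {G : SimpleGraph V}
    (h4 : ForbiddenIn (cycleGraph 4) G) (h4c : ForbiddenIn (cycleGraph 4)ᶜ G)
    (hp : ForbiddenIn (pathGraph 4) G) : NoBad G := by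
  intro u v a b hua hvb hub hva hvna hunb
  have huv : u ≠ v := fun h => hva (by rw [← h]; exact hua)
  have hab : a ≠ b := fun h => hva (by rw [h]; exact hvb)
  have hau : u ≠ a := hua.ne
  have hbv : v ≠ b := hvb.ne
  by_cases huv2 : G.Adj u v <;> by_cases hab2 : G.Adj a b
  · exact h4 ⟨⟨![u, a, b, v], inj4 hau hunb huv hab hvna.symm hbv.symm⟩,
      iffAll4 (iff_of_true hua (by decide)) (iff_of_false hub (by decide))
        (iff_of_true huv2 (by decide)) (iff_of_true hab2 (by decide))
        (iff_of_false (fun h => hva h.symm) (by decide))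
        (iff_of_true hvb.symm (by decide))⟩
  · exact hp ⟨⟨![a, u, v, b], inj4 hau.symm hvna.symm hab huv hunb hbv⟩,
      iffAll4 (iff_of_true hua.symm (by rw [pathGraph_adj]; decide))
        (iff_of_false (fun h => hva h.symm) (by rw [pathGraph_adj]; decide))
        (iff_of_false hab2 (by rw [pathGraph_adj]; decide))
        (iff_of_true huv2 (by rw [pathGraph_adj]; decide))
        (iff_of_false hub (by rw [pathGraph_adj]; decide))
        (iff_of_true hvb (by rw [pathGraph_adj]; decide))⟩
  · exact hp ⟨⟨![u, a, b, v], inj4 hau hunb huv hab hvna.symm hbv.symm⟩,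
      iffAll4 (iff_of_true hua (by rw [pathGraph_adj]; decide))
        (iff_of_false hub (by rw [pathGraph_adj]; decide))
        (iff_of_false huv2 (by rw [pathGraph_adj]; decide))
        (iff_of_true hab2 (by rw [pathGraph_adj]; decide))
        (iff_of_false (fun h => hva h.symm) (by rw [pathGraph_adj]; decide))
        (iff_of_true hvb.symm (by rw [pathGraph_adj]; decide))⟩
  · exact h4c ⟨⟨![u, v, a, b], inj4 huv hau hunb hvna hbv hab⟩,
      iffAll4 (iff_of_false huv2 (by decide)) (iff_of_true hua (by decide))
        (iff_of_false hub (by decide)) (iff_of_false hva (by decide))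
        (iff_of_true hvb (by decide)) (iff_of_false hab2 (by decide))⟩

private lemma noBad_of_threshold {V : Type*} {G : SimpleGraph V} {S K : Set V}
    (h : IsSKThreshold G S K) : NoBad G := by
  obtain ⟨n, X, A, hXX, hAA, hXA, hK, hS, hcov, hXne, hAne, hadj⟩ := h
  have hmem : ∀ w : V, (∃ i, w ∈ X i) ∨ (∃ i, w ∈ A i) := by
    intro w
    rcases hcov w with h | h
    · right; rw [hS] at h; exact Set.mem_iUnion.mp h
    · left; rw [hK] at h; exact Set.mem_iUnion.mp h
  have hnot : ∀ (w : V) i j, w ∈ X i → w ∈ A j → False := by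
    intro w i j hx ha; exact Set.disjoint_left.mp (hXA i j) hx ha
  have hKm : ∀ (w : V) i, w ∈ X i → w ∈ K := by
    intro w i hx; rw [hK]; exact Set.mem_iUnion.mpr ⟨i, hx⟩
  have hclq : ∀ (w z : V) i j, w ∈ X i → z ∈ X j → w ≠ z → G.Adj w z := by
    intro w z i j hw hz hne
    exact (hadj w z).mpr (Or.inl ⟨hKm w i hw, hKm z j hz, hne⟩)
  have hcross : ∀ (w z : V) (i j : Fin (n+1)), (j : ℕ) < (i : ℕ) → w ∈ A i → z ∈ X j →
      G.Adj w z := by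
    intro w z i j hij hw hz
    exact (hadj w z).mpr (Or.inr ⟨i, j, hij, Or.inl ⟨hw, hz⟩⟩)
  have hXuniq : ∀ (w : V) i j, w ∈ X i → w ∈ X j → i = j := by
    intro w i j h1 h2
    by_contra hne
    exact Set.disjoint_left.mp (hXX i j hne) h1 h2
  have hAuniq : ∀ (w : V) i j, w ∈ A i → w ∈ A j → i = j := by
    intro w i j h1 h2
    by_contra hne
    exact Set.disjoint_left.mp (hAA i j hne) h1 h2
  have hedge : ∀ (w z : V) i, G.Adj w z → w ∈ A i → ∃ j : Fin (n+1), (j:ℕ) < (i:ℕ) ∧ z ∈ X j := by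
    intro w z i ha hw
    rcases (hadj w z).mp ha with ⟨hwK, -, -⟩ | ⟨i', j', hij, ⟨hwA, hzX⟩ | ⟨hzA, hwX⟩⟩
    · rw [hK] at hwK
      obtain ⟨i0, h0⟩ := Set.mem_iUnion.mp hwK
      exact absurd (hnot w i0 i h0 hw) (by simp)
    · obtain rfl := hAuniq w i' i hwA hw
      exact ⟨j', hij, hzX⟩
    · exact absurd (hnot w j' i hwX hw) (by simp)
  intro u v a b hua hvb hub hva hvna hunb
  rcases hmem u with ⟨iu, huX⟩ | ⟨iu, huA⟩ <;> rcases hmem v with ⟨iv, hvX⟩ | ⟨iv, hvA⟩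
  · -- both in clique
    rcases hmem a with ⟨ja, haX⟩ | ⟨ia, haA⟩
    · exact hva (hclq v a iv ja hvX haX hvna)
    · rcases hmem b with ⟨jb, hbX⟩ | ⟨ib, hbA⟩
      · exact hub (hclq u b iu jb huX hbX hunb)
      · obtain ⟨j1, hj1, hu1⟩ := hedge a u ia hua.symm haA
        obtain ⟨j2, hj2, hv2⟩ := hedge b v ib hvb.symm hbA
        have e1 : (j1 : ℕ) = (iu : ℕ) := congrArg Fin.val (hXuniq u j1 iu hu1 huX)
        have e2 : (j2 : ℕ) = (iv : ℕ) := congrArg Fin.val (hXuniq v j2 iv hv2 hvX)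
        have h1 : ¬ ((iu : ℕ) < (ib : ℕ)) := fun hlt => hub (hcross b u ib iu hlt hbA huX).symm
        have h2 : ¬ ((iv : ℕ) < (ia : ℕ)) := fun hlt => hva (hcross a v ia iv hlt haA hvX).symm
        omega
  · -- u clique, v stable
    obtain ⟨jb, hjb, hbX⟩ := hedge v b iv hvb hvA
    exact hub (hclq u b iu jb huX hbX hunb)
  · -- u stable, v clique
    obtain ⟨ja, hja, haX⟩ := hedge u a iu hua huA
    exact hva (hclq v a iv ja hvX haX hvna)
  · -- both stable
    obtain ⟨ja, hja, haX⟩ := hedge u a iu hua huA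
    obtain ⟨jb, hjb, hbX⟩ := hedge v b iv hvb hvA
    have h1 : ¬ ((jb : ℕ) < (iu : ℕ)) := fun hlt => hub (hcross u b iu jb hlt huA hbX)
    have h2 : ¬ ((ja : ℕ) < (iv : ℕ)) := fun hlt => hva (hcross v a iv ja hlt hvA haX)
    omega

private lemma exists_iso_or_dom {V : Type u} [Fintype V] [Nonempty V] {G : SimpleGraph V}
    (hnb : NoBad G) :
    (∃ v, ∀ w, ¬ G.Adj v w) ∨ (∃ v, ∀ w, w ≠ v → G.Adj v w) := by
  classical
  obtain ⟨u, -, hu⟩ := Finset.exists_min_image Finset.univ (fun w => G.degree w)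
    ⟨Classical.arbitrary V, Finset.mem_univ _⟩
  have key : ∀ z a : V, G.Adj u a → a ≠ z → G.Adj z a := by
    intro z a hua haz
    by_contra hza
    have hzu : z ≠ u := by rintro rfl; exact hza hua
    by_cases hb : ∃ b, G.Adj z b ∧ ¬ G.Adj u b ∧ u ≠ b
    · obtain ⟨b, h1, h2, h3⟩ := hb
      exact hnb hua h1 h2 hza haz.symm h3
    · push_neg at hb
      -- every neighbor of z other than u is a neighbor of u
      have hsub : ∀ b, G.Adj z b → b ≠ u → G.Adj u b := by
        intro b h1 h2
        by_contra h3
        exact h2 (hb b h1 h3).symm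
      have hane : a ∉ G.neighborFinset z := by
        rw [SimpleGraph.mem_neighborFinset]; exact hza
      have hamem : a ∈ G.neighborFinset u := by
        rw [SimpleGraph.mem_neighborFinset]; exact hua
      have hdeg := hu z (Finset.mem_univ z)
      rw [← SimpleGraph.card_neighborFinset_eq_degree, ← SimpleGraph.card_neighborFinset_eq_degree] at hdeg
      by_cases hzu2 : G.Adj z u
      · -- u ∈ N(z)
        have hsub2 : (G.neighborFinset z).erase u ⊆
            ((G.neighborFinset u).erase a).erase z := by
          intro b hbmem
          rw [Finset.mem_erase] at hbmem
          obtain ⟨hbu, hbz⟩ := hbmem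
          rw [SimpleGraph.mem_neighborFinset] at hbz
          rw [Finset.mem_erase, Finset.mem_erase, SimpleGraph.mem_neighborFinset]
          refine ⟨hbz.ne', ?_, hsub b hbz hbu⟩
          rintro rfl; exact hza hbz
        have humem : u ∈ G.neighborFinset z := by
          rw [SimpleGraph.mem_neighborFinset]; exact hzu2
        have hzmem : z ∈ (G.neighborFinset u).erase a := by
          rw [Finset.mem_erase, SimpleGraph.mem_neighborFinset]
          exact ⟨haz.symm, hzu2.symm⟩
        have hc2 := Finset.card_le_card hsub2
        rw [Finset.card_erase_of_mem humem, Finset.card_erase_of_mem hzmem,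
          Finset.card_erase_of_mem hamem] at hc2
        have hss : ({a, z} : Finset V) ⊆ G.neighborFinset u := by
          intro x hx
          rw [Finset.mem_insert, Finset.mem_singleton] at hx
          rcases hx with rfl | rfl
          · exact hamem
          · rw [SimpleGraph.mem_neighborFinset]; exact hzu2.symm
        have h2card := Finset.card_le_card hss
        rw [Finset.card_pair haz] at h2card
        have h1card : 0 < (G.neighborFinset z).card := Finset.card_pos.mpr ⟨u, humem⟩
        omega
      · -- u ∉ N(z)
        have hsub2 : G.neighborFinset z ⊆ (G.neighborFinset u).erase a := by
          intro b hbz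
          rw [SimpleGraph.mem_neighborFinset] at hbz
          rw [Finset.mem_erase, SimpleGraph.mem_neighborFinset]
          have hbu : b ≠ u := by rintro rfl; exact hzu2 hbz
          refine ⟨?_, hsub b hbz hbu⟩
          rintro rfl; exact hza hbz
        have hc2 := Finset.card_le_card hsub2
        rw [Finset.card_erase_of_mem hamem] at hc2
        have hpos : 0 < (G.neighborFinset u).card := Finset.card_pos.mpr ⟨a, hamem⟩
        omega
  by_cases hiso : ∃ w, G.Adj u w
  · obtain ⟨w, huw⟩ := hiso
    right
    refine ⟨w, fun z hz => ?_⟩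
    exact (key z w huw (fun h => hz h.symm)).symm
  · left
    push_neg at hiso
    exact ⟨u, hiso⟩

private lemma extend_isolated {V : Type u} (G : SimpleGraph V) (v : V)
    (hv : ∀ w, ¬ G.Adj v w)
    (hT : ∃ S K, IsSKThreshold (G.comap (Subtype.val : {w : V // w ≠ v} → V)) S K) :
    ∃ S K : Set V, IsSKThreshold G S K := by
  obtain ⟨S', K', n, X', A', hXX, hAA, hXA, hK, hS, hcov, hXne, hAne, hadj⟩ := hT
  set X : Fin (n+1) → Set V := fun i => Subtype.val '' X' i with hXdef
  set A : Fin (n+1) → Set V := fun i => (if i = 0 then {v} else ∅) ∪ Subtype.val '' A' i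
    with hAdef
  have hXmem : ∀ (w : V) i, w ∈ X i ↔ ∃ hw : w ≠ v, (⟨w, hw⟩ : {w : V // w ≠ v}) ∈ X' i := by
    intro w i
    constructor
    · rintro ⟨x, hx, rfl⟩; exact ⟨x.2, hx⟩
    · rintro ⟨hw, h⟩; exact ⟨⟨w, hw⟩, h, rfl⟩
  have hAmem : ∀ (w : V) i, w ∈ A i ↔
      ((i = 0 ∧ w = v) ∨ ∃ hw : w ≠ v, (⟨w, hw⟩ : {w : V // w ≠ v}) ∈ A' i) := by
    intro w i
    constructor
    · rintro (h | ⟨x, hx, rfl⟩)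
      · by_cases hi : i = 0
        · rw [if_pos hi] at h; exact Or.inl ⟨hi, Set.mem_singleton_iff.mp h⟩
        · rw [if_neg hi] at h; exact absurd h (Set.notMem_empty _)
      · exact Or.inr ⟨x.2, hx⟩
    · rintro (⟨hi, rfl⟩ | ⟨hw, h⟩)
      · left; rw [if_pos hi]; exact Set.mem_singleton _
      · right; exact ⟨⟨w, hw⟩, h, rfl⟩
  refine ⟨⋃ i, A i, ⋃ i, X i, n, X, A, ?_, ?_, ?_, rfl, rfl, ?_, ?_, ?_, ?_⟩
  · intro i j hij
    exact Set.disjoint_image_of_injective Subtype.coe_injective (hXX i j hij)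
  · intro i j hij
    rw [Set.disjoint_left]
    intro w hwi hwj
    rw [hAmem] at hwi hwj
    rcases hwi with ⟨hi0, rfl⟩ | ⟨hw, hwi⟩
    · rcases hwj with ⟨hj0, -⟩ | ⟨hw, -⟩
      · exact hij (hi0.trans hj0.symm)
      · exact hw rfl
    · rcases hwj with ⟨-, rfl⟩ | ⟨hw', hwj⟩
      · exact hw rfl
      · exact Set.disjoint_left.mp (hAA i j hij) hwi hwj
  · intro i j
    rw [Set.disjoint_left]
    intro w hwX hwA
    rw [hXmem] at hwX
    obtain ⟨hw, hwX⟩ := hwX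
    rw [hAmem] at hwA
    rcases hwA with ⟨-, rfl⟩ | ⟨hw', hwA⟩
    · exact hw rfl
    · exact Set.disjoint_left.mp (hXA i j) hwX hwA
  · intro w
    by_cases hw : w = v
    · left
      exact Set.mem_iUnion.mpr ⟨0, (hAmem w 0).mpr (Or.inl ⟨rfl, hw⟩)⟩
    · rcases hcov ⟨w, hw⟩ with h | h
      · left
        rw [hS] at h
        obtain ⟨i, hi⟩ := Set.mem_iUnion.mp h
        exact Set.mem_iUnion.mpr ⟨i, (hAmem w i).mpr (Or.inr ⟨hw, hi⟩)⟩
      · right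
        rw [hK] at h
        obtain ⟨i, hi⟩ := Set.mem_iUnion.mp h
        exact Set.mem_iUnion.mpr ⟨i, (hXmem w i).mpr ⟨hw, hi⟩⟩
  · intro i hi
    obtain ⟨x, hx⟩ := hXne i hi
    exact ⟨x.1, (hXmem x.1 i).mpr ⟨x.2, hx⟩⟩
  · intro i hi
    obtain ⟨x, hx⟩ := hAne i hi
    exact ⟨x.1, (hAmem x.1 i).mpr (Or.inr ⟨x.2, hx⟩)⟩
  · intro p q
    have hKnew : ∀ w : V, w ∈ (⋃ i, X i) ↔
        ∃ hw : w ≠ v, (⟨w, hw⟩ : {w : V // w ≠ v}) ∈ K' := by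
      intro w
      rw [hK]
      constructor
      · intro h
        obtain ⟨i, hi⟩ := Set.mem_iUnion.mp h
        obtain ⟨hw, hi⟩ := (hXmem w i).mp hi
        exact ⟨hw, Set.mem_iUnion.mpr ⟨i, hi⟩⟩
      · rintro ⟨hw, h⟩
        obtain ⟨i, hi⟩ := Set.mem_iUnion.mp h
        exact Set.mem_iUnion.mpr ⟨i, (hXmem w i).mpr ⟨hw, hi⟩⟩
    by_cases hp : p = v
    · subst hp
      refine iff_of_false (hv q) ?_
      rintro (⟨h1, -, -⟩ | ⟨i, j, hij, ⟨h1, -⟩ | ⟨-, h1⟩⟩)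
      · obtain ⟨hw, -⟩ := (hKnew _).mp h1
        exact hw rfl
      · rcases (hAmem _ i).mp h1 with ⟨hi0, -⟩ | ⟨hw, -⟩
        · rw [hi0] at hij; exact absurd hij (by simp)
        · exact hw rfl
      · obtain ⟨hw, -⟩ := (hXmem _ j).mp h1
        exact hw rfl
    · by_cases hq : q = v
      · subst hq
        refine iff_of_false (fun h => hv p h.symm) ?_
        rintro (⟨-, h1, -⟩ | ⟨i, j, hij, ⟨-, h1⟩ | ⟨h1, -⟩⟩)
        · obtain ⟨hw, -⟩ := (hKnew _).mp h1; exact hw rfl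
        · obtain ⟨hw, -⟩ := (hXmem _ j).mp h1; exact hw rfl
        · rcases (hAmem _ i).mp h1 with ⟨hi0, -⟩ | ⟨hw, -⟩
          · rw [hi0] at hij; exact absurd hij (by simp)
          · exact hw rfl
      · have hGadj : G.Adj p q ↔
            (G.comap (Subtype.val : {w : V // w ≠ v} → V)).Adj ⟨p, hp⟩ ⟨q, hq⟩ := Iff.rfl
        rw [hGadj, hadj ⟨p,hp⟩ ⟨q,hq⟩]
        constructor
        · rintro (⟨h1, h2, h3⟩ | ⟨i, j, hij, ⟨h1, h2⟩ | ⟨h1, h2⟩⟩)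
          · exact Or.inl ⟨(hKnew p).mpr ⟨hp, h1⟩, (hKnew q).mpr ⟨hq, h2⟩,
              fun e => h3 (Subtype.ext e)⟩
          · exact Or.inr ⟨i, j, hij, Or.inl ⟨(hAmem p i).mpr (Or.inr ⟨hp, h1⟩),
              (hXmem q j).mpr ⟨hq, h2⟩⟩⟩
          · exact Or.inr ⟨i, j, hij, Or.inr ⟨(hAmem q i).mpr (Or.inr ⟨hq, h1⟩),
              (hXmem p j).mpr ⟨hp, h2⟩⟩⟩
        · rintro (⟨h1, h2, h3⟩ | ⟨i, j, hij, ⟨h1, h2⟩ | ⟨h1, h2⟩⟩)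
          · obtain ⟨hw1, h1⟩ := (hKnew p).mp h1
            obtain ⟨hw2, h2⟩ := (hKnew q).mp h2
            exact Or.inl ⟨h1, h2, fun e => h3 (congrArg Subtype.val e)⟩
          · rcases (hAmem p i).mp h1 with ⟨-, h⟩ | ⟨hw1, h1'⟩
            · exact absurd h hp
            · obtain ⟨hw2, h2'⟩ := (hXmem q j).mp h2
              exact Or.inr ⟨i, j, hij, Or.inl ⟨h1', h2'⟩⟩
          · rcases (hAmem q i).mp h1 with ⟨-, h⟩ | ⟨hw1, h1'⟩
            · exact absurd h hq
            · obtain ⟨hw2, h2'⟩ := (hXmem p j).mp h2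
              exact Or.inr ⟨i, j, hij, Or.inr ⟨h1', h2'⟩⟩

private lemma extend_dominating {V : Type u} (G : SimpleGraph V) (v : V)
    (hv : ∀ w, w ≠ v → G.Adj v w)
    (hT : ∃ S K, IsSKThreshold (G.comap (Subtype.val : {w : V // w ≠ v} → V)) S K) :
    ∃ S K : Set V, IsSKThreshold G S K := by
  obtain ⟨S', K', n, X', A', hXX, hAA, hXA, hK, hS, hcov, hXne, hAne, hadj⟩ := hT
  by_cases hA0 : A' 0 = ∅
  · -- `A'_0` empty : put `v` into `X_0`
    set X : Fin (n+1) → Set V := fun i => (if i = 0 then {v} else ∅) ∪ Subtype.val '' X' i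
      with hXdef
    set A : Fin (n+1) → Set V := fun i => Subtype.val '' A' i with hAdef
    have hXmem : ∀ (w : V) i, w ∈ X i ↔
        ((i = 0 ∧ w = v) ∨ ∃ hw : w ≠ v, (⟨w, hw⟩ : {w : V // w ≠ v}) ∈ X' i) := by
      intro w i
      constructor
      · rintro (h | ⟨x, hx, rfl⟩)
        · by_cases hi : i = 0
          · rw [if_pos hi] at h; exact Or.inl ⟨hi, Set.mem_singleton_iff.mp h⟩
          · rw [if_neg hi] at h; exact absurd h (Set.notMem_empty _)
        · exact Or.inr ⟨x.2, hx⟩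
      · rintro (⟨hi, rfl⟩ | ⟨hw, h⟩)
        · left; rw [if_pos hi]; exact Set.mem_singleton _
        · right; exact ⟨⟨w, hw⟩, h, rfl⟩
    have hAmem : ∀ (w : V) i, w ∈ A i ↔
        ∃ hw : w ≠ v, (⟨w, hw⟩ : {w : V // w ≠ v}) ∈ A' i := by
      intro w i
      constructor
      · rintro ⟨x, hx, rfl⟩; exact ⟨x.2, hx⟩
      · rintro ⟨hw, h⟩; exact ⟨⟨w, hw⟩, h, rfl⟩
    have hApos : ∀ (x : {w : V // w ≠ v}) (i : Fin (n+1)), x ∈ A' i → 0 < (i : ℕ) := by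
      intro x i hx
      rcases Nat.eq_zero_or_pos (i : ℕ) with h | h
      · have : i = 0 := Fin.ext (by simpa using h)
        rw [this, hA0] at hx
        exact absurd hx (Set.notMem_empty _)
      · exact h
    have hKnew : ∀ w : V, w ∈ (⋃ i, X i) ↔
        (w = v ∨ ∃ hw : w ≠ v, (⟨w, hw⟩ : {w : V // w ≠ v}) ∈ K') := by
      intro w
      rw [hK]
      constructor
      · intro h
        obtain ⟨i, hi⟩ := Set.mem_iUnion.mp h
        rcases (hXmem w i).mp hi with ⟨-, rfl⟩ | ⟨hw, hi'⟩
        · exact Or.inl rfl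
        · exact Or.inr ⟨hw, Set.mem_iUnion.mpr ⟨i, hi'⟩⟩
      · rintro (rfl | ⟨hw, h⟩)
        · exact Set.mem_iUnion.mpr ⟨0, (hXmem w 0).mpr (Or.inl ⟨rfl, rfl⟩)⟩
        · obtain ⟨i, hi⟩ := Set.mem_iUnion.mp h
          exact Set.mem_iUnion.mpr ⟨i, (hXmem w i).mpr (Or.inr ⟨hw, hi⟩)⟩
    refine ⟨⋃ i, A i, ⋃ i, X i, n, X, A, ?_, ?_, ?_, rfl, rfl, ?_, ?_, ?_, ?_⟩
    · intro i j hij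
      rw [Set.disjoint_left]
      intro w hwi hwj
      rw [hXmem] at hwi hwj
      rcases hwi with ⟨hi0, rfl⟩ | ⟨hw, hwi⟩
      · rcases hwj with ⟨hj0, -⟩ | ⟨hw, -⟩
        · exact hij (hi0.trans hj0.symm)
        · exact hw rfl
      · rcases hwj with ⟨-, rfl⟩ | ⟨hw', hwj⟩
        · exact hw rfl
        · exact Set.disjoint_left.mp (hXX i j hij) hwi hwj
    · intro i j hij
      exact Set.disjoint_image_of_injective Subtype.coe_injective (hAA i j hij)
    · intro i j
      rw [Set.disjoint_left]
      intro w hwX hwA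
      obtain ⟨hw', hwA⟩ := (hAmem w j).mp hwA
      rcases (hXmem w i).mp hwX with ⟨-, rfl⟩ | ⟨hw, hwX'⟩
      · exact hw' rfl
      · exact Set.disjoint_left.mp (hXA i j) hwX' hwA
    · intro w
      by_cases hw : w = v
      · right
        exact Set.mem_iUnion.mpr ⟨0, (hXmem w 0).mpr (Or.inl ⟨rfl, hw⟩)⟩
      · rcases hcov ⟨w, hw⟩ with h | h
        · left
          rw [hS] at h
          obtain ⟨i, hi⟩ := Set.mem_iUnion.mp h
          exact Set.mem_iUnion.mpr ⟨i, (hAmem w i).mpr ⟨hw, hi⟩⟩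
        · right
          rw [hK] at h
          obtain ⟨i, hi⟩ := Set.mem_iUnion.mp h
          exact Set.mem_iUnion.mpr ⟨i, (hXmem w i).mpr (Or.inr ⟨hw, hi⟩)⟩
    · intro i hi
      obtain ⟨x, hx⟩ := hXne i hi
      exact ⟨x.1, (hXmem x.1 i).mpr (Or.inr ⟨x.2, hx⟩)⟩
    · intro i hi
      obtain ⟨x, hx⟩ := hAne i hi
      exact ⟨x.1, (hAmem x.1 i).mpr ⟨x.2, hx⟩⟩
    · intro p q
      by_cases hp : p = v
      · rw [hp]
        by_cases hq : q = v
        · rw [hq]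
          refine iff_of_false (G.loopless.irrefl _) ?_
          rintro (⟨-, -, h3⟩ | ⟨i, j, hij, ⟨h1, -⟩ | ⟨h1, -⟩⟩)
          · exact h3 rfl
          · obtain ⟨hw, -⟩ := (hAmem _ i).mp h1; exact hw rfl
          · obtain ⟨hw, -⟩ := (hAmem _ i).mp h1; exact hw rfl
        · refine iff_of_true (hv q hq) ?_
          rcases hcov ⟨q, hq⟩ with h | h
          · rw [hS] at h
            obtain ⟨i, hi⟩ := Set.mem_iUnion.mp h
            have hipos : ((0 : Fin (n+1)) : ℕ) < (i : ℕ) := by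
              simpa using hApos _ i hi
            exact Or.inr ⟨i, 0, hipos, Or.inr ⟨(hAmem q i).mpr ⟨hq, hi⟩,
              (hXmem _ 0).mpr (Or.inl ⟨rfl, rfl⟩)⟩⟩
          · refine Or.inl ⟨(hKnew _).mpr (Or.inl rfl), (hKnew q).mpr (Or.inr ⟨hq, h⟩),
              fun e => hq e.symm⟩
      · by_cases hq : q = v
        · subst hq
          refine iff_of_true ((hv p hp).symm) ?_
          rcases hcov ⟨p, hp⟩ with h | h
          · rw [hS] at h
            obtain ⟨i, hi⟩ := Set.mem_iUnion.mp h
            have hipos : ((0 : Fin (n+1)) : ℕ) < (i : ℕ) := by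
              simpa using hApos _ i hi
            exact Or.inr ⟨i, 0, hipos, Or.inl ⟨(hAmem p i).mpr ⟨hp, hi⟩,
              (hXmem _ 0).mpr (Or.inl ⟨rfl, rfl⟩)⟩⟩
          · exact Or.inl ⟨(hKnew p).mpr (Or.inr ⟨hp, h⟩), (hKnew _).mpr (Or.inl rfl), hp⟩
        · have hGadj : G.Adj p q ↔
              (G.comap (Subtype.val : {w : V // w ≠ v} → V)).Adj ⟨p, hp⟩ ⟨q, hq⟩ := Iff.rfl
          rw [hGadj, hadj ⟨p,hp⟩ ⟨q,hq⟩]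
          constructor
          · rintro (⟨h1, h2, h3⟩ | ⟨i, j, hij, ⟨h1, h2⟩ | ⟨h1, h2⟩⟩)
            · exact Or.inl ⟨(hKnew p).mpr (Or.inr ⟨hp, h1⟩), (hKnew q).mpr (Or.inr ⟨hq, h2⟩),
                fun e => h3 (Subtype.ext e)⟩
            · exact Or.inr ⟨i, j, hij, Or.inl ⟨(hAmem p i).mpr ⟨hp, h1⟩,
                (hXmem q j).mpr (Or.inr ⟨hq, h2⟩)⟩⟩
            · exact Or.inr ⟨i, j, hij, Or.inr ⟨(hAmem q i).mpr ⟨hq, h1⟩,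
                (hXmem p j).mpr (Or.inr ⟨hp, h2⟩)⟩⟩
          · rintro (⟨h1, h2, h3⟩ | ⟨i, j, hij, ⟨h1, h2⟩ | ⟨h1, h2⟩⟩)
            · rcases (hKnew p).mp h1 with rfl | ⟨hw1, h1'⟩
              · exact absurd rfl hp
              · rcases (hKnew q).mp h2 with rfl | ⟨hw2, h2'⟩
                · exact absurd rfl hq
                · exact Or.inl ⟨h1', h2', fun e => h3 (congrArg Subtype.val e)⟩
            · obtain ⟨hw1, h1'⟩ := (hAmem p i).mp h1
              rcases (hXmem q j).mp h2 with ⟨-, h⟩ | ⟨hw2, h2'⟩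
              · exact absurd h hq
              · exact Or.inr ⟨i, j, hij, Or.inl ⟨h1', h2'⟩⟩
            · obtain ⟨hw1, h1'⟩ := (hAmem q i).mp h1
              rcases (hXmem p j).mp h2 with ⟨-, h⟩ | ⟨hw2, h2'⟩
              · exact absurd h hp
              · exact Or.inr ⟨i, j, hij, Or.inr ⟨h1', h2'⟩⟩
  · -- `A'_0` nonempty : shift all indices by one, `X_0 = {v}`
    set X : Fin (n+2) → Set V := fun i => if (i : ℕ) = 0 then {v}
      else Subtype.val '' X' ⟨(i : ℕ) - 1, by have := i.isLt; omega⟩ with hXdef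
    set A : Fin (n+2) → Set V := fun i => if (i : ℕ) = 0 then ∅
      else Subtype.val '' A' ⟨(i : ℕ) - 1, by have := i.isLt; omega⟩ with hAdef
    have hXmem : ∀ (w : V) (i : Fin (n+2)), w ∈ X i ↔
        (((i : ℕ) = 0 ∧ w = v) ∨ ∃ (k : Fin (n+1)) (hw : w ≠ v),
          (k : ℕ) + 1 = (i : ℕ) ∧ (⟨w, hw⟩ : {w : V // w ≠ v}) ∈ X' k) := by
      intro w i
      by_cases hi : (i : ℕ) = 0
      · rw [hXdef]
        simp only [if_pos hi]
        constructor
        · intro h; exact Or.inl ⟨hi, Set.mem_singleton_iff.mp h⟩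
        · rintro (⟨-, rfl⟩ | ⟨k, hw, hk, -⟩)
          · exact Set.mem_singleton _
          · omega
      · rw [hXdef]
        simp only [if_neg hi]
        constructor
        · rintro ⟨x, hx, rfl⟩
          exact Or.inr ⟨⟨(i : ℕ) - 1, by have := i.isLt; omega⟩, x.2, by show (i : ℕ) - 1 + 1 = (i : ℕ); omega, hx⟩
        · rintro (⟨h, -⟩ | ⟨k, hw, hk, hmem⟩)
          · exact absurd h hi
          · have hke : (⟨(i : ℕ) - 1, by have := i.isLt; omega⟩ : Fin (n+1)) = k :=
              Fin.ext (by show (i : ℕ) - 1 = (k : ℕ); omega)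
            rw [hke]
            exact ⟨⟨w, hw⟩, hmem, rfl⟩
    have hAmem : ∀ (w : V) (i : Fin (n+2)), w ∈ A i ↔
        ∃ (k : Fin (n+1)) (hw : w ≠ v),
          (k : ℕ) + 1 = (i : ℕ) ∧ (⟨w, hw⟩ : {w : V // w ≠ v}) ∈ A' k := by
      intro w i
      by_cases hi : (i : ℕ) = 0
      · rw [hAdef]
        simp only [if_pos hi]
        constructor
        · intro h; exact absurd h (Set.notMem_empty _)
        · rintro ⟨k, hw, hk, -⟩; omega
      · rw [hAdef]
        simp only [if_neg hi]
        constructor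
        · rintro ⟨x, hx, rfl⟩
          exact ⟨⟨(i : ℕ) - 1, by have := i.isLt; omega⟩, x.2, by show (i : ℕ) - 1 + 1 = (i : ℕ); omega, hx⟩
        · rintro ⟨k, hw, hk, hmem⟩
          have hke : (⟨(i : ℕ) - 1, by have := i.isLt; omega⟩ : Fin (n+1)) = k :=
            Fin.ext (by show (i : ℕ) - 1 = (k : ℕ); omega)
          rw [hke]
          exact ⟨⟨w, hw⟩, hmem, rfl⟩
    have hKnew : ∀ w : V, w ∈ (⋃ i, X i) ↔
        (w = v ∨ ∃ hw : w ≠ v, (⟨w, hw⟩ : {w : V // w ≠ v}) ∈ K') := by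
      intro w
      rw [hK]
      constructor
      · intro h
        obtain ⟨i, hi⟩ := Set.mem_iUnion.mp h
        rcases (hXmem w i).mp hi with ⟨-, rfl⟩ | ⟨k, hw, -, hk⟩
        · exact Or.inl rfl
        · exact Or.inr ⟨hw, Set.mem_iUnion.mpr ⟨k, hk⟩⟩
      · rintro (rfl | ⟨hw, h⟩)
        · exact Set.mem_iUnion.mpr ⟨0, (hXmem w 0).mpr (Or.inl ⟨rfl, rfl⟩)⟩
        · obtain ⟨k, hk⟩ := Set.mem_iUnion.mp h
          exact Set.mem_iUnion.mpr ⟨⟨(k : ℕ) + 1, by have := k.isLt; omega⟩,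
            (hXmem w _).mpr (Or.inr ⟨k, hw, rfl, hk⟩)⟩
    refine ⟨⋃ i, A i, ⋃ i, X i, n + 1, X, A, ?_, ?_, ?_, rfl, rfl, ?_, ?_, ?_, ?_⟩
    · intro i j hij
      rw [Set.disjoint_left]
      intro w hwi hwj
      rcases (hXmem w i).mp hwi with ⟨hi0, rfl⟩ | ⟨k1, hw1, hk1, hm1⟩
      · rcases (hXmem w j).mp hwj with ⟨hj0, -⟩ | ⟨k2, hw2, -, -⟩
        · exact hij (Fin.ext (hi0.trans hj0.symm))
        · exact hw2 rfl
      · rcases (hXmem w j).mp hwj with ⟨-, rfl⟩ | ⟨k2, hw2, hk2, hm2⟩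
        · exact hw1 rfl
        · have hkne : k1 ≠ k2 := fun e => hij (Fin.ext (by have := congrArg Fin.val e; omega))
          exact Set.disjoint_left.mp (hXX k1 k2 hkne) hm1 hm2
    · intro i j hij
      rw [Set.disjoint_left]
      intro w hwi hwj
      obtain ⟨k1, hw1, hk1, hm1⟩ := (hAmem w i).mp hwi
      obtain ⟨k2, hw2, hk2, hm2⟩ := (hAmem w j).mp hwj
      have hkne : k1 ≠ k2 := fun e => hij (Fin.ext (by have := congrArg Fin.val e; omega))
      exact Set.disjoint_left.mp (hAA k1 k2 hkne) hm1 hm2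
    · intro i j
      rw [Set.disjoint_left]
      intro w hwX hwA
      obtain ⟨k2, hw2, hk2, hm2⟩ := (hAmem w j).mp hwA
      rcases (hXmem w i).mp hwX with ⟨-, rfl⟩ | ⟨k1, hw1, hk1, hm1⟩
      · exact hw2 rfl
      · exact Set.disjoint_left.mp (hXA k1 k2) hm1 hm2
    · intro w
      by_cases hw : w = v
      · right
        exact Set.mem_iUnion.mpr ⟨0, (hXmem w 0).mpr (Or.inl ⟨by simp, hw⟩)⟩
      · rcases hcov ⟨w, hw⟩ with h | h
        · left
          rw [hS] at h
          obtain ⟨k, hk⟩ := Set.mem_iUnion.mp h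
          exact Set.mem_iUnion.mpr ⟨⟨(k : ℕ) + 1, by have := k.isLt; omega⟩,
            (hAmem w _).mpr ⟨k, hw, rfl, hk⟩⟩
        · right
          rw [hK] at h
          obtain ⟨k, hk⟩ := Set.mem_iUnion.mp h
          exact Set.mem_iUnion.mpr ⟨⟨(k : ℕ) + 1, by have := k.isLt; omega⟩,
            (hXmem w _).mpr (Or.inr ⟨k, hw, rfl, hk⟩)⟩
    · intro i hi
      by_cases hi0 : (i : ℕ) = 0
      · exact ⟨v, (hXmem v i).mpr (Or.inl ⟨hi0, rfl⟩)⟩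
      · obtain ⟨x, hx⟩ := hXne ⟨(i : ℕ) - 1, by have := i.isLt; omega⟩
          (by show (i : ℕ) - 1 < n; omega)
        exact ⟨x.1, (hXmem x.1 i).mpr
          (Or.inr ⟨_, x.2, by show (i : ℕ) - 1 + 1 = (i : ℕ); omega, hx⟩)⟩
    · intro i hi
      have hi0 : (i : ℕ) ≠ 0 := by omega
      set k : Fin (n+1) := ⟨(i : ℕ) - 1, by have := i.isLt; omega⟩ with hkdef
      have hne : (A' k).Nonempty := by
        rcases Nat.eq_zero_or_pos (k : ℕ) with h | h
        · have : k = 0 := Fin.ext (by simpa using h)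
          rw [this]
          exact Set.nonempty_iff_ne_empty.mpr hA0
        · exact hAne k h
      obtain ⟨x, hx⟩ := hne
      exact ⟨x.1, (hAmem x.1 i).mpr ⟨k, x.2, by show (i : ℕ) - 1 + 1 = (i : ℕ); omega, hx⟩⟩
    · intro p q
      by_cases hp : p = v
      · rw [hp]
        by_cases hq : q = v
        · rw [hq]
          refine iff_of_false (G.loopless.irrefl _) ?_
          rintro (⟨-, -, h3⟩ | ⟨i, j, hij, ⟨h1, -⟩ | ⟨h1, -⟩⟩)
          · exact h3 rfl
          · obtain ⟨k, hw, -, -⟩ := (hAmem _ i).mp h1; exact hw rfl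
          · obtain ⟨k, hw, -, -⟩ := (hAmem _ i).mp h1; exact hw rfl
        · refine iff_of_true (hv q hq) ?_
          rcases hcov ⟨q, hq⟩ with h | h
          · rw [hS] at h
            obtain ⟨k, hk⟩ := Set.mem_iUnion.mp h
            refine Or.inr ⟨⟨(k : ℕ) + 1, by have := k.isLt; omega⟩, 0, by show 0 < (k : ℕ) + 1; omega,
              Or.inr ⟨(hAmem q _).mpr ⟨k, hq, rfl, hk⟩, (hXmem _ 0).mpr (Or.inl ⟨rfl, rfl⟩)⟩⟩
          · exact Or.inl ⟨(hKnew _).mpr (Or.inl rfl), (hKnew q).mpr (Or.inr ⟨hq, h⟩),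
              fun e => hq e.symm⟩
      · by_cases hq : q = v
        · subst hq
          refine iff_of_true ((hv p hp).symm) ?_
          rcases hcov ⟨p, hp⟩ with h | h
          · rw [hS] at h
            obtain ⟨k, hk⟩ := Set.mem_iUnion.mp h
            refine Or.inr ⟨⟨(k : ℕ) + 1, by have := k.isLt; omega⟩, 0, by show 0 < (k : ℕ) + 1; omega,
              Or.inl ⟨(hAmem p _).mpr ⟨k, hp, rfl, hk⟩, (hXmem _ 0).mpr (Or.inl ⟨rfl, rfl⟩)⟩⟩
          · exact Or.inl ⟨(hKnew p).mpr (Or.inr ⟨hp, h⟩), (hKnew _).mpr (Or.inl rfl), hp⟩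
        · have hGadj : G.Adj p q ↔
              (G.comap (Subtype.val : {w : V // w ≠ v} → V)).Adj ⟨p, hp⟩ ⟨q, hq⟩ := Iff.rfl
          rw [hGadj, hadj ⟨p,hp⟩ ⟨q,hq⟩]
          constructor
          · rintro (⟨h1, h2, h3⟩ | ⟨i, j, hij, ⟨h1, h2⟩ | ⟨h1, h2⟩⟩)
            · exact Or.inl ⟨(hKnew p).mpr (Or.inr ⟨hp, h1⟩), (hKnew q).mpr (Or.inr ⟨hq, h2⟩),
                fun e => h3 (Subtype.ext e)⟩
            · exact Or.inr ⟨⟨(i : ℕ) + 1, by have := i.isLt; omega⟩,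
                ⟨(j : ℕ) + 1, by have := j.isLt; omega⟩, by show (j : ℕ) + 1 < (i : ℕ) + 1; omega,
                Or.inl ⟨(hAmem p _).mpr ⟨i, hp, rfl, h1⟩,
                  (hXmem q _).mpr (Or.inr ⟨j, hq, rfl, h2⟩)⟩⟩
            · exact Or.inr ⟨⟨(i : ℕ) + 1, by have := i.isLt; omega⟩,
                ⟨(j : ℕ) + 1, by have := j.isLt; omega⟩, by show (j : ℕ) + 1 < (i : ℕ) + 1; omega,
                Or.inr ⟨(hAmem q _).mpr ⟨i, hq, rfl, h1⟩,
                  (hXmem p _).mpr (Or.inr ⟨j, hp, rfl, h2⟩)⟩⟩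
          · rintro (⟨h1, h2, h3⟩ | ⟨i, j, hij, ⟨h1, h2⟩ | ⟨h1, h2⟩⟩)
            · rcases (hKnew p).mp h1 with rfl | ⟨hw1, h1'⟩
              · exact absurd rfl hp
              · rcases (hKnew q).mp h2 with rfl | ⟨hw2, h2'⟩
                · exact absurd rfl hq
                · exact Or.inl ⟨h1', h2', fun e => h3 (congrArg Subtype.val e)⟩
            · obtain ⟨k1, hw1, hk1, hm1⟩ := (hAmem p i).mp h1
              rcases (hXmem q j).mp h2 with ⟨-, h⟩ | ⟨k2, hw2, hk2, hm2⟩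
              · exact absurd h hq
              · exact Or.inr ⟨k1, k2, by omega, Or.inl ⟨hm1, hm2⟩⟩
            · obtain ⟨k1, hw1, hk1, hm1⟩ := (hAmem q i).mp h1
              rcases (hXmem p j).mp h2 with ⟨-, h⟩ | ⟨k2, hw2, hk2, hm2⟩
              · exact absurd h hp
              · exact Or.inr ⟨k1, k2, by omega, Or.inr ⟨hm1, hm2⟩⟩

private lemma threshold_of_empty {V : Type u} (G : SimpleGraph V) (h : IsEmpty V) :
    ∃ S K : Set V, IsSKThreshold G S K := by
  refine ⟨∅, ∅, 0, fun _ => ∅, fun _ => ∅, ?_, ?_, ?_, ?_, ?_, ?_, ?_, ?_, ?_⟩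
  · intro i j _; simp
  · intro i j _; simp
  · intro i j; simp
  · simp
  · simp
  · intro w; exact h.elim w
  · intro i hi; exact absurd hi (Nat.not_lt_zero _)
  · intro i hi; exact absurd hi (by have := i.isLt; omega)
  · intro u w; exact h.elim u

private lemma threshold_of_noBad : ∀ (N : ℕ) {V : Type u} [Fintype V] (G : SimpleGraph V),
    Fintype.card V ≤ N → NoBad G → ∃ S K : Set V, IsSKThreshold G S K := by
  intro N
  induction N with
  | zero =>
    intro V _ G hc _
    exact threshold_of_empty G (Fintype.card_eq_zero_iff.mp (Nat.le_zero.mp hc))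
  | succ N ih =>
    intro V _ G hc hnb
    classical
    rcases isEmpty_or_nonempty V with hemp | hne
    · exact threshold_of_empty G hemp
    · rcases exists_iso_or_dom hnb with ⟨v, hv⟩ | ⟨v, hv⟩
      · refine extend_isolated G v hv (ih _ ?_ ?_)
        · have hlt : Fintype.card {w : V // w ≠ v} < Fintype.card V :=
            Fintype.card_subtype_lt (x := v) (by simp)
          omega
        · intro u w a b h1 h2 h3 h4 h5 h6
          exact hnb h1 h2 h3 h4 (Subtype.coe_ne_coe.mpr h5) (Subtype.coe_ne_coe.mpr h6)
      · refine extend_dominating G v hv (ih _ ?_ ?_)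
        · have hlt : Fintype.card {w : V // w ≠ v} < Fintype.card V :=
            Fintype.card_subtype_lt (x := v) (by simp)
          omega
        · intro u w a b h1 h2 h3 h4 h5 h6
          exact hnb h1 h2 h3 h4 (Subtype.coe_ne_coe.mpr h5) (Subtype.coe_ne_coe.mpr h6)


/-- Hammer–Chvátal. -/
theorem stmt_5 {V : Type u} [Fintype V] (G : SimpleGraph V) :
    (∃ S K : Set V, IsSKThreshold G S K) ↔
      ForbiddenIn (cycleGraph 4) G ∧ ForbiddenIn (cycleGraph 4)ᶜ G ∧
        ForbiddenIn (pathGraph 4) G := by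
  constructor
  · rintro ⟨S, K, hT⟩
    have hnb := noBad_of_threshold hT
    refine ⟨?_, ?_, ?_⟩
    · rintro ⟨f, hf⟩
      exact hnb ((hf 0 3).mpr (by decide)) ((hf 1 2).mpr (by decide))
        (fun h => (by decide : ¬ (cycleGraph 4).Adj 0 2) ((hf 0 2).mp h))
        (fun h => (by decide : ¬ (cycleGraph 4).Adj 1 3) ((hf 1 3).mp h))
        (fun e => (by decide : (1 : Fin 4) ≠ 3) (f.injective e))
        (fun e => (by decide : (0 : Fin 4) ≠ 2) (f.injective e))
    · rintro ⟨f, hf⟩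
      exact hnb ((hf 0 2).mpr (by decide)) ((hf 1 3).mpr (by decide))
        (fun h => (by decide : ¬ (cycleGraph 4)ᶜ.Adj 0 3) ((hf 0 3).mp h))
        (fun h => (by decide : ¬ (cycleGraph 4)ᶜ.Adj 1 2) ((hf 1 2).mp h))
        (fun e => (by decide : (1 : Fin 4) ≠ 2) (f.injective e))
        (fun e => (by decide : (0 : Fin 4) ≠ 3) (f.injective e))
    · rintro ⟨f, hf⟩
      exact hnb ((hf 1 0).mpr (by rw [pathGraph_adj]; decide))
        ((hf 2 3).mpr (by rw [pathGraph_adj]; decide))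
        (fun h => (by rw [pathGraph_adj]; decide : ¬ (pathGraph 4).Adj 1 3) ((hf 1 3).mp h))
        (fun h => (by rw [pathGraph_adj]; decide : ¬ (pathGraph 4).Adj 2 0) ((hf 2 0).mp h))
        (fun e => (by decide : (2 : Fin 4) ≠ 0) (f.injective e))
        (fun e => (by decide : (1 : Fin 4) ≠ 3) (f.injective e))
  · rintro ⟨h1, h2, h3⟩
    exact threshold_of_noBad (Fintype.card V) G le_rfl (noBad_of_forbidden h1 h2 h3)
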